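/- arXiv:2005.09239 — 2 statements merged into one kernel-verified Lean document; each statement's English description precedes it below -/
import Mathlib

section
/- If P is a projection in M_s(ℂ) with P ≠ 0 and P ≠ I, then dist(P, ℂI_s) = 1/2. -/
open scoped Matrix.Norms.L2Operator
open Matrix

lemma aux_norm_ge (s : ℕ) (A : Matrix (Fin s) (Fin s) ℂ) (c : ℂ)
    (x : Fin s → ℂ) (hx : x ≠ 0) (h : A *ᵥ x = c • x) : ‖c‖ ≤ ‖A‖ := by
  set x' : EuclideanSpace ℂ (Fin s) := (WithLp.equiv 2 _).symm x with hx'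
  have h1 := A.l2_opNorm_mulVec x'
  have h2 : (EuclideanSpace.equiv (Fin s) ℂ).symm (A *ᵥ x') = c • x' := by
    show (WithLp.equiv 2 _).symm (A *ᵥ x) = c • x'
    rw [h, hx']
    rfl
  rw [h2, norm_smul] at h1
  have hx'0 : ‖x'‖ > 0 := by
    simp only [norm_pos_iff]
    simpa [hx'] using hx
  exact le_of_mul_le_mul_right h1 hx'0

lemma aux_exists_fixed (s : ℕ) (P : Matrix (Fin s) (Fin s) ℂ)
    (hidem : IsIdempotentElem P) (h0 : P ≠ 0) :
    ∃ x : Fin s → ℂ, x ≠ 0 ∧ P *ᵥ x = x := by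
  obtain ⟨v, hv⟩ : ∃ v : Fin s → ℂ, P *ᵥ v ≠ 0 := by
    by_contra h
    push_neg at h
    apply h0
    apply Matrix.toLin'.injective
    refine LinearMap.ext fun v => ?_
    simpa [Matrix.toLin'_apply] using h v
  refine ⟨P *ᵥ v, hv, ?_⟩
  rw [Matrix.mulVec_mulVec, hidem]

lemma aux_exists_ker (s : ℕ) (P : Matrix (Fin s) (Fin s) ℂ)
    (hidem : IsIdempotentElem P) (h1 : P ≠ 1) :
    ∃ y : Fin s → ℂ, y ≠ 0 ∧ P *ᵥ y = 0 := by
  obtain ⟨v, hv⟩ : ∃ v : Fin s → ℂ, P *ᵥ v ≠ v := by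
    by_contra h
    push_neg at h
    apply h1
    apply Matrix.toLin'.injective
    refine LinearMap.ext fun v => ?_
    simpa [Matrix.toLin'_apply] using h v
  refine ⟨v - P *ᵥ v, by simpa [sub_eq_zero] using fun h => hv h.symm, ?_⟩
  rw [Matrix.mulVec_sub, Matrix.mulVec_mulVec, hidem, sub_self]

/-- A nontrivial projection in `M_s(ℂ)` has operator-norm distance `1/2`
to the scalar matrices. -/
theorem stmt_1 (s : ℕ) (P : Matrix (Fin s) (Fin s) ℂ)
    (hsa : IsSelfAdjoint P) (hidem : IsIdempotentElem P)
    (h0 : P ≠ 0) (h1 : P ≠ 1) :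
    Metric.infDist P {M : Matrix (Fin s) (Fin s) ℂ | ∃ μ : ℂ, M = μ • 1} = 1 / 2 := by
  have hs : 0 < s := by
    rcases Nat.eq_zero_or_pos s with h | h
    · subst h
      exact absurd (by ext i j; exact i.elim0) h0
    · exact h
  haveI : Nonempty (Fin s) := ⟨⟨0, hs⟩⟩
  haveI : Nontrivial (EuclideanSpace ℂ (Fin s)) := inferInstance
  have hSne : Set.Nonempty {M : Matrix (Fin s) (Fin s) ℂ | ∃ μ : ℂ, M = μ • 1} :=
    ⟨(0 : ℂ) • 1, ⟨0, rfl⟩⟩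
  have hnorm1 : ‖(1 : Matrix (Fin s) (Fin s) ℂ)‖ = 1 := by
    rw [Matrix.cstar_norm_def, _root_.map_one]
    exact norm_one
  -- upper bound
  have hub : ‖P - (1/2 : ℂ) • 1‖ = 1 / 2 := by
    set A := P - (1/2 : ℂ) • 1 with hA
    have hAsa : Aᴴ = A := by
      have hP : Pᴴ = P := hsa
      simp [hA, Matrix.conjTranspose_sub, hP, Matrix.conjTranspose_smul]
    have hAA : A * A = (1/4 : ℂ) • 1 := by
      rw [hA, sub_mul, mul_sub, mul_sub, hidem]
      simp only [Matrix.smul_mul, Matrix.mul_smul, Matrix.one_mul, Matrix.mul_one, smul_smul]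
      module
    have h2 : ‖A‖ * ‖A‖ = 1/4 := by
      rw [← Matrix.l2_opNorm_conjTranspose_mul_self, hAsa, hAA, norm_smul, hnorm1]
      norm_num
    nlinarith [norm_nonneg A]
  -- lower bound per point
  have hlb : ∀ μ : ℂ, (1:ℝ)/2 ≤ ‖P - μ • 1‖ := by
    intro μ
    obtain ⟨x, hx0, hx⟩ := aux_exists_fixed s P hidem h0
    obtain ⟨y, hy0, hy⟩ := aux_exists_ker s P hidem h1
    have e1 : (P - μ • 1) *ᵥ x = (1 - μ) • x := by
      rw [Matrix.sub_mulVec, hx, Matrix.smul_mulVec, Matrix.one_mulVec, sub_smul, one_smul]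
    have e2 : (P - μ • 1) *ᵥ y = (-μ) • y := by
      rw [Matrix.sub_mulVec, hy, Matrix.smul_mulVec, Matrix.one_mulVec, zero_sub, neg_smul]
    have g1 := aux_norm_ge s _ _ x hx0 e1
    have g2 := aux_norm_ge s _ _ y hy0 e2
    have hsum : (1:ℝ) ≤ ‖1 - μ‖ + ‖-μ‖ := by
      have := norm_add_le (1 - μ) μ
      simpa [norm_neg] using this
    linarith
  apply le_antisymm
  · have hmem : ((1/2 : ℂ) • 1 : Matrix (Fin s) (Fin s) ℂ) ∈
        {M : Matrix (Fin s) (Fin s) ℂ | ∃ μ : ℂ, M = μ • 1} := ⟨1/2, rfl⟩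
    have := Metric.infDist_le_dist_of_mem (x := P) hmem
    rwa [dist_eq_norm, hub] at this
  · refine le_of_not_gt fun hlt => ?_
    obtain ⟨M, ⟨μ, rfl⟩, hd⟩ := (Metric.infDist_lt_iff hSne).mp hlt
    rw [dist_eq_norm] at hd
    exact absurd hd (not_lt.mpr (hlb μ))
end

section
/- Let (X, α, β) be a regular s-equivalence system with X a compact metric space. Then every central sequence in C(X, α, β, M_s(ℂ)) is trivial: if (a_n) is a bounded sequence of elements with ‖f a_n − a_n f‖ → 0 for every f ∈ C(X, α, β, M_s(ℂ)), then dist(a_n, Z) → 0 where Z is the center of C(X, α, β, M_s(ℂ)). -/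
open scoped Matrix.Norms.L2Operator
set_option maxHeartbeats 1000000
open scoped Matrix.Norms.L2Operator

lemma euc_comp_le (s : ℕ) (w : EuclideanSpace ℂ (Fin s)) (i : Fin s) : ‖w i‖ ≤ ‖w‖ := by
  have h := norm_inner_le_norm (𝕜 := ℂ) (EuclideanSpace.single i (1:ℂ)) w
  rw [EuclideanSpace.inner_single_left, EuclideanSpace.norm_single] at h
  simpa using h

lemma entry_le (s : ℕ) (A : Matrix (Fin s) (Fin s) ℂ) (i j : Fin s) : ‖A i j‖ ≤ ‖A‖ := by
  have h := A.l2_opNorm_mulVec (EuclideanSpace.single j (1:ℂ))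
  rw [EuclideanSpace.norm_single, norm_one, mul_one] at h
  refine le_trans ?_ (le_trans (euc_comp_le s _ i) h)
  have : ((EuclideanSpace.equiv (Fin s) ℂ).symm (A.mulVec (EuclideanSpace.single j (1:ℂ)))) i
      = A i j := by
    show (A.mulVec (Pi.single j 1)) i = A i j
    rw [Matrix.mulVec_single]
    simp
  rw [this]

lemma stdBasis_norm_le (s : ℕ) (i j : Fin s) (c : ℂ) : ‖Matrix.single i j c‖ ≤ ‖c‖ := by
  rw [Matrix.l2_opNorm_def]
  refine ContinuousLinearMap.opNorm_le_bound _ (norm_nonneg c) fun x => ?_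
  have : ((Matrix.toEuclideanLin (Matrix.single i j c)) x : EuclideanSpace ℂ (Fin s))
      = EuclideanSpace.single i (c * x j) := by
    rw [Matrix.toEuclideanLin_apply]
    show (WithLp.equiv 2 (Fin s → ℂ)).symm _ = EuclideanSpace.single i (c * x j)
    rw [EuclideanSpace.single]
    congr 1
    ext k
    simp only [Matrix.mulVec, dotProduct, Matrix.single, Matrix.of_apply, ite_mul, zero_mul, Pi.single_apply]
    by_cases hk : i = k <;> simp [hk, ite_and, Finset.sum_ite_eq, eq_comm, Matrix.mulVec, dotProduct]
  have h2 : ‖((Matrix.toEuclideanLin (Matrix.single i j c)) x : EuclideanSpace ℂ (Fin s))‖ = ‖c * x j‖ := by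
    rw [this]; exact EuclideanSpace.norm_single i (c * x j)
  calc ‖_‖ = ‖c * x j‖ := h2
    _ ≤ ‖c‖ * ‖x‖ := by rw [norm_mul]; exact mul_le_mul_of_nonneg_left (euc_comp_le s x j) (norm_nonneg c)

lemma norm_le_sum_entries (s : ℕ) (A : Matrix (Fin s) (Fin s) ℂ) :
    ‖A‖ ≤ ∑ i : Fin s, ∑ j : Fin s, ‖A i j‖ := by
  conv_lhs => rw [Matrix.matrix_eq_sum_single A]
  refine le_trans (norm_sum_le _ _) (Finset.sum_le_sum fun i _ => ?_)
  exact le_trans (norm_sum_le _ _) (Finset.sum_le_sum fun j _ => stdBasis_norm_le s i j (A i j))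

lemma mat_norm_one (s : ℕ) (hs : 0 < s) : ‖(1 : Matrix (Fin s) (Fin s) ℂ)‖ = 1 := by
  haveI : Nonempty (Fin s) := ⟨⟨0, hs⟩⟩
  haveI : Nontrivial (EuclideanSpace ℂ (Fin s)) := by
    refine ⟨0, EuclideanSpace.single ⟨0, hs⟩ (1:ℂ), fun h => ?_⟩
    have := congrArg norm h
    rw [norm_zero, EuclideanSpace.norm_single, norm_one] at this
    exact zero_ne_one this
  rw [Matrix.cstar_norm_def, map_one]
  exact ContinuousLinearMap.norm_id

lemma key_scalar_approx (s : ℕ) (hs : 0 < s) (A : Matrix (Fin s) (Fin s) ℂ) (δ : ℝ)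
    (hδ : ∀ i j : Fin s, ‖Matrix.single i j (1:ℂ) * A - A * Matrix.single i j 1‖ ≤ δ) :
    ‖A - ((Matrix.trace A) / (s : ℂ)) • 1‖ ≤ 2 * (s:ℝ)^2 * δ := by
  set i₀ : Fin s := ⟨0, hs⟩
  set c : ℂ := A i₀ i₀ with hc
  set B : Matrix (Fin s) (Fin s) ℂ := A - c • 1 with hBdef
  have hBpq : ∀ p q : Fin s,
      B p q = ((Matrix.single i₀ p (1:ℂ) * A - A * Matrix.single i₀ p 1 :
        Matrix (Fin s) (Fin s) ℂ)) i₀ q := by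
    intro p q
    have h1 : B p q = A p q - c * ((1 : Matrix (Fin s) (Fin s) ℂ) p q) := by
      rw [hBdef, Matrix.sub_apply, Matrix.smul_apply, smul_eq_mul]
    rw [Matrix.sub_apply, Matrix.single_mul_apply_same, one_mul, h1]
    by_cases hq : q = p
    · subst hq
      rw [Matrix.mul_single_apply_same]
      simp [Matrix.one_apply_eq, hc]
    · rw [Matrix.mul_single_apply_of_ne (hbj := hq), Matrix.one_apply_ne (Ne.symm hq)]
      ring
  have hent : ∀ p q : Fin s, ‖B p q‖ ≤ δ := by
    intro p q
    rw [hBpq p q]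
    exact le_trans (entry_le s _ i₀ q) (hδ i₀ p)
  have hδ0 : 0 ≤ δ := le_trans (norm_nonneg _) (hent i₀ i₀)
  have hB : ‖B‖ ≤ (s:ℝ)^2 * δ := by
    refine le_trans (norm_le_sum_entries s B) ?_
    calc ∑ i : Fin s, ∑ j : Fin s, ‖B i j‖ ≤ ∑ _i : Fin s, ∑ _j : Fin s, δ :=
          Finset.sum_le_sum fun i _ => Finset.sum_le_sum fun j _ => hent i j
      _ = (s:ℝ)^2 * δ := by simp [Finset.sum_const]; ring
  have htrB : Matrix.trace B = Matrix.trace A - c * s := by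
    simp [hBdef, Matrix.trace_sub, Matrix.trace_smul, Matrix.trace_one, mul_comm]
  have htr : ‖(Matrix.trace A) / (s:ℂ) - c‖ ≤ δ := by
    have h1 : ‖Matrix.trace B‖ ≤ (s:ℝ) * δ := by
      rw [Matrix.trace]
      refine le_trans (norm_sum_le _ _) ?_
      calc ∑ i : Fin s, ‖Matrix.diag B i‖ ≤ ∑ _i : Fin s, δ :=
            Finset.sum_le_sum fun i _ => hent i i
        _ = (s:ℝ) * δ := by simp [Finset.sum_const]
    have hs' : (s:ℂ) ≠ 0 := Nat.cast_ne_zero.mpr hs.ne'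
    have h2 : (Matrix.trace A) / (s:ℂ) - c = Matrix.trace B / (s:ℂ) := by
      rw [htrB]; field_simp
    have hns : ‖(s:ℂ)‖ = (s:ℝ) := by simp
    rw [h2, norm_div, hns, div_le_iff₀ (by exact_mod_cast hs), mul_comm]
    exact h1
  have hsplit : A - ((Matrix.trace A) / (s : ℂ)) • 1 = B + (c - (Matrix.trace A) / (s : ℂ)) • 1 := by
    rw [hBdef, sub_smul]; abel
  rw [hsplit]
  refine le_trans (norm_add_le _ _) ?_
  have h3 : ‖(c - (Matrix.trace A) / (s : ℂ)) • (1 : Matrix (Fin s) (Fin s) ℂ)‖ ≤ δ := by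
    rw [norm_smul, mat_norm_one s hs, mul_one]
    rw [show c - (Matrix.trace A) / (s : ℂ) = -((Matrix.trace A) / (s:ℂ) - c) by ring, norm_neg]
    exact htr
  have hs2 : (1:ℝ) ≤ (s:ℝ)^2 := by
    have : (1:ℝ) ≤ (s:ℝ) := by exact_mod_cast hs
    nlinarith
  calc ‖B‖ + ‖_‖ ≤ (s:ℝ)^2 * δ + δ := add_le_add hB h3
    _ ≤ 2 * (s:ℝ)^2 * δ := by nlinarith



/-- For a regular `s`-equivalence system `(X, α, β)`, every central sequence in
`C(X, α, β, M_s(ℂ))` is trivial: its distance to the center tends to `0`. -/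
theorem stmt_12 {X : Type*} [MetricSpace X] [CompactSpace X] (s : ℕ)
    (α : Set (X × X)) (hclosed : IsClosed α)
    (hrefl : ∀ x : X, (x, x) ∈ α)
    (hsymm : ∀ x y : X, (x, y) ∈ α → (y, x) ∈ α)
    (htrans : ∀ x y z : X, (x, y) ∈ α → (y, z) ∈ α → (x, z) ∈ α)
    (β : X → X → Matrix (Fin s) (Fin s) ℂ)
    (hunit : ∀ x y : X, (x, y) ∈ α → β x y ∈ Matrix.unitaryGroup (Fin s) ℂ)
    (hcocycle : ∀ x y z : X, (x, y) ∈ α → (y, z) ∈ α →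
      star (β x y) * β x z = β y z)
    -- the algebra `C(X, α, β, M_s(ℂ))` as a subset of `C(X, M_s(ℂ))`
    (S : Set C(X, Matrix (Fin s) (Fin s) ℂ))
    (hS : S = {f : C(X, Matrix (Fin s) (Fin s) ℂ) |
      ∀ x y : X, (x, y) ∈ α → β x y * f x * star (β x y) = f y})
    -- regularity
    (hreg : ∀ (x : X) (T : Matrix (Fin s) (Fin s) ℂ), ∃ f ∈ S, f x = T)
    -- a central sequence in `C(X, α, β, M_s(ℂ))`
    (a : ℕ → C(X, Matrix (Fin s) (Fin s) ℂ)) (haS : ∀ n, a n ∈ S)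
    (hbdd : ∃ C : ℝ, ∀ n, ‖a n‖ ≤ C)
    (hcentral : ∀ f ∈ S,
      Filter.Tendsto (fun n => ‖f * a n - a n * f‖) Filter.atTop (nhds 0)) :
    Filter.Tendsto
      (fun n => Metric.infDist (a n) {z ∈ S | ∀ f ∈ S, z * f = f * z})
      Filter.atTop (nhds 0) := by
  set Z : Set C(X, Matrix (Fin s) (Fin s) ℂ) := {z ∈ S | ∀ f ∈ S, z * f = f * z} with hZ
  rcases Nat.eq_zero_or_pos s with hs | hs
  · -- s = 0 : the matrix algebra is trivial
    subst hs
    haveI : Subsingleton (Matrix (Fin 0) (Fin 0) ℂ) :=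
      ⟨fun A B => by ext i; exact absurd i.2 (by simp)⟩
    have haZ : ∀ n, a n ∈ Z := fun n =>
      ⟨haS n, fun f _ => by ext x i j; exact absurd i.2 (by simp)⟩
    have h0 : ∀ n, Metric.infDist (a n) Z = 0 := by
      intro n
      have h := Metric.infDist_le_dist_of_mem (x := a n) (haZ n)
      rw [dist_self] at h
      exact le_antisymm h Metric.infDist_nonneg
    simpa [h0] using tendsto_const_nhds
  -- s > 0
  obtain ⟨C0, hC0⟩ := hbdd
  set C : ℝ := max C0 0 with hCdef
  have hC : ∀ n, ‖a n‖ ≤ C := fun n => (hC0 n).trans (le_max_left _ _)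
  have hCpos : 0 ≤ C := le_max_right _ _
  -- the scalar part of `a n`
  have htrace_eq : ∀ n (x y : X), (x, y) ∈ α →
      Matrix.trace (a n y) = Matrix.trace (a n x) := by
    intro n x y hxy
    have h := (hS ▸ haS n) x y hxy
    rw [← h, mul_assoc, Matrix.trace_mul_comm, mul_assoc,
      Unitary.star_mul_self_of_mem (hunit x y hxy), mul_one]
  have hzcont : ∀ n, Continuous fun x =>
      ((Matrix.trace (a n x)) / (s : ℂ)) • (1 : Matrix (Fin s) (Fin s) ℂ) :=
    fun n => (((a n).continuous.matrix_trace).div_const _).smul continuous_const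
  set z : ℕ → C(X, Matrix (Fin s) (Fin s) ℂ) :=
    fun n => ⟨fun x => ((Matrix.trace (a n x)) / (s : ℂ)) • 1, hzcont n⟩ with hzdef
  have hzZ : ∀ n, z n ∈ Z := by
    intro n
    constructor
    · rw [hS]
      intro x y hxy
      show β x y * (((Matrix.trace (a n x)) / (s : ℂ)) • 1) * star (β x y)
          = ((Matrix.trace (a n y)) / (s : ℂ)) • 1
      rw [htrace_eq n x y hxy, mul_smul_comm, smul_mul_assoc, mul_one,
        Unitary.mul_star_self_of_mem (hunit x y hxy)]
    · intro f _
      refine ContinuousMap.ext fun x => ?_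
      show (((Matrix.trace (a n x)) / (s : ℂ)) • 1) * f x
          = f x * (((Matrix.trace (a n x)) / (s : ℂ)) • 1)
      rw [smul_mul_assoc, one_mul, mul_smul_comm, mul_one]
  -- choose witnesses of regularity
  choose F hFS hFx using fun (x : X) (i j : Fin s) =>
    hreg x (Matrix.single i j (1 : ℂ))
  rw [Metric.tendsto_atTop]
  intro ε hε
  set K : ℝ := 2 * (s : ℝ) ^ 2 * (1 + 2 * C) with hKdef
  have hK0 : 0 < K := by positivity
  set η : ℝ := ε / (K + 1) with hηdef
  have hη : 0 < η := by positivity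
  -- the open cover
  set U : X → Set X := fun x =>
    {y | ∀ i j : Fin s, ‖F x i j y - Matrix.single i j (1 : ℂ)‖ < η} with hUdef
  have hUopen : ∀ x, IsOpen (U x) := by
    intro x
    have : U x = ⋂ (i : Fin s) (j : Fin s),
        {y | ‖F x i j y - Matrix.single i j (1 : ℂ)‖ < η} := by
      ext y; simp [hUdef, Set.mem_iInter]
    rw [this]
    refine isOpen_iInter_of_finite fun i => isOpen_iInter_of_finite fun j => ?_
    exact isOpen_lt (((F x i j).continuous.sub continuous_const).norm) continuous_const
  have hUmem : ∀ x, x ∈ U x := by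
    intro x i j
    rw [hFx x i j]
    simpa using hη
  obtain ⟨t, ht⟩ := isCompact_univ.elim_finite_subcover U hUopen
    (fun x _ => Set.mem_iUnion.mpr ⟨x, hUmem x⟩)
  -- eventual smallness of the finitely many commutators
  have hev : ∀ᶠ n in Filter.atTop, ∀ x ∈ t, ∀ i j : Fin s,
      ‖F x i j * a n - a n * F x i j‖ < η := by
    rw [Filter.eventually_all_finset]
    intro x _
    rw [Filter.eventually_all]
    intro i
    rw [Filter.eventually_all]
    intro j
    exact (hcentral (F x i j) (hFS x i j)).eventually_lt_const hη
  obtain ⟨N, hN⟩ := Filter.eventually_atTop.mp hev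
  refine ⟨N, fun n hn => ?_⟩
  -- pointwise estimate
  have hpt : ∀ y : X, ‖a n y - z n y‖ ≤ K * η := by
    intro y
    obtain ⟨x, hxt, hyU⟩ := Set.mem_iUnion₂.mp (ht (Set.mem_univ y))
    have hcomm : ∀ i j : Fin s,
        ‖Matrix.single i j (1 : ℂ) * a n y - a n y * Matrix.single i j 1‖
          ≤ (1 + 2 * C) * η := by
      intro i j
      set E := Matrix.single i j (1 : ℂ)
      set A := a n y
      set G := F x i j y
      have hid : E * A - A * E = (G * A - A * G) + ((E - G) * A + A * (G - E)) := by
        noncomm_ring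
      have h1 : ‖G * A - A * G‖ ≤ η := by
        have := ContinuousMap.norm_coe_le_norm (F x i j * a n - a n * F x i j) y
        simp only [ContinuousMap.sub_apply, ContinuousMap.mul_apply] at this
        exact this.trans (hN n hn x hxt i j).le
      have hGE : ‖E - G‖ ≤ η := by
        rw [norm_sub_rev]
        exact (hyU i j).le
      have hA : ‖A‖ ≤ C := (ContinuousMap.norm_coe_le_norm (a n) y).trans (hC n)
      have h2 : ‖(E - G) * A‖ ≤ η * C :=
        (norm_mul_le _ _).trans (mul_le_mul hGE hA (norm_nonneg _) hη.le)
      have h3 : ‖A * (G - E)‖ ≤ C * η := by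
        refine (norm_mul_le _ _).trans (mul_le_mul hA ?_ (norm_nonneg _) hCpos)
        exact (hyU i j).le
      calc ‖E * A - A * E‖ ≤ ‖G * A - A * G‖ + (‖(E - G) * A‖ + ‖A * (G - E)‖) := by
            rw [hid]
            exact (norm_add_le _ _).trans (by gcongr; exact norm_add_le _ _)
        _ ≤ η + (η * C + C * η) := by gcongr
        _ = (1 + 2 * C) * η := by ring
    have := key_scalar_approx s hs (a n y) ((1 + 2 * C) * η) hcomm
    calc ‖a n y - z n y‖
        = ‖a n y - ((Matrix.trace (a n y)) / (s : ℂ)) • 1‖ := rfl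
      _ ≤ 2 * (s : ℝ) ^ 2 * ((1 + 2 * C) * η) := this
      _ = K * η := by rw [hKdef]; ring
  -- conclude
  have hdist : ‖a n - z n‖ ≤ K * η := by
    rw [ContinuousMap.norm_le _ (by positivity)]
    intro y
    simpa using hpt y
  have hinf : Metric.infDist (a n) Z ≤ K * η := by
    refine le_trans (Metric.infDist_le_dist_of_mem (hzZ n)) ?_
    rw [dist_eq_norm]
    exact hdist
  have hKη : K * η < ε := by
    rw [hηdef]
    rw [mul_div_assoc'] at *
    rw [div_lt_iff₀ (by positivity)]
    nlinarith
  rw [Real.dist_eq, sub_zero, abs_of_nonneg Metric.infDist_nonneg]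
  exact lt_of_le_of_lt hinf hKη
end
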